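/- arXiv:1811.05733 — 2 statements merged into one kernel-verified Lean document; each statement's English description precedes it below -/
import Mathlib

section
/- If h₁,…,h_n are positive semidefinite Hermitian n×n matrices, then the mixed determinant D(h₁,…,h_n) is non-negative. -/
open scoped ComplexOrder

open Finset

/-- The mixed determinant: the polarization of `det`. -/
noncomputable def mixedDet (n : ℕ) (h : Fin n → Matrix (Fin n) (Fin n) ℂ) : ℂ :=
  (n.factorial : ℂ)⁻¹ *
    ∑ S ∈ Finset.univ.powerset.filter Finset.Nonempty,
      (-1 : ℂ) ^ (n - S.card) * (∑ i ∈ S, h i).det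

section aux
open Matrix

variable {n : ℕ}

/-- The matrix whose `i`-th row is row `p.2 i` of `A (p.1 i)`. -/
noncomputable def mdR (A : Fin n → Matrix (Fin n) (Fin n) ℂ)
    (p : Equiv.Perm (Fin n) × (Fin n → Fin n)) : Matrix (Fin n) (Fin n) ℂ :=
  Matrix.of fun i j => A (p.1 i) (p.2 i) j

lemma mdR_comp (A : Fin n → Matrix (Fin n) (Fin n) ℂ)
    (p : Equiv.Perm (Fin n) × (Fin n → Fin n)) (π : Equiv.Perm (Fin n)) :
    mdR A (p.1 * π, p.2 ∘ ⇑π) = (mdR A p).submatrix ⇑π id := rfl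

lemma md_det_expand (A : Fin n → Matrix (Fin n) (Fin n) ℂ) (σ : Equiv.Perm (Fin n)) :
    Matrix.det (Matrix.of fun i j => ((A (σ i))ᴴ * A (σ i)) i j)
      = ∑ f : Fin n → Fin n,
          (starRingEnd ℂ) (∏ i, mdR A (σ, f) i i) * Matrix.det (mdR A (σ, f)) := by
  have e1 : (Matrix.of fun i j => ((A (σ i))ᴴ * A (σ i)) i j)
      = fun i => ∑ k : Fin n, (starRingEnd ℂ) (A (σ i) k i) • (A (σ i) k) := by
    ext i j
    simp [Matrix.mul_apply, Finset.sum_apply, Matrix.conjTranspose_apply, mul_comm]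
  show ((Matrix.detRowAlternating (n := Fin n) (R := ℂ)).toMultilinearMap
      (Matrix.of fun i j => ((A (σ i))ᴴ * A (σ i)) i j)) = _
  rw [e1]
  rw [(Matrix.detRowAlternating (n := Fin n) (R := ℂ)).toMultilinearMap.map_sum
    (g := fun i k => (starRingEnd ℂ) (A (σ i) k i) • (A (σ i) k))]
  refine Finset.sum_congr rfl fun f _ => ?_
  rw [(Matrix.detRowAlternating (n := Fin n) (R := ℂ)).toMultilinearMap.map_smul_univ]
  rw [map_prod]
  simp only [smul_eq_mul]
  rfl

lemma md_orbit (A : Fin n → Matrix (Fin n) (Fin n) ℂ)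
    (p : Equiv.Perm (Fin n) × (Fin n → Fin n)) :
    ∑ π : Equiv.Perm (Fin n),
        (starRingEnd ℂ) (∏ i, mdR A (p.1 * π, p.2 ∘ ⇑π) i i)
          * Matrix.det (mdR A (p.1 * π, p.2 ∘ ⇑π))
      = (starRingEnd ℂ) (Matrix.det (mdR A p)) * Matrix.det (mdR A p) := by
  calc ∑ π : Equiv.Perm (Fin n),
        (starRingEnd ℂ) (∏ i, mdR A (p.1 * π, p.2 ∘ ⇑π) i i)
          * Matrix.det (mdR A (p.1 * π, p.2 ∘ ⇑π))
      = ∑ π : Equiv.Perm (Fin n),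
          ((Equiv.Perm.sign π : ℤ) : ℂ) * (starRingEnd ℂ) (∏ i, mdR A p (π i) i)
            * Matrix.det (mdR A p) := by
        refine Finset.sum_congr rfl fun π _ => ?_
        rw [mdR_comp, Matrix.det_permute]
        simp only [Matrix.submatrix_apply, id_eq]
        ring
    _ = (∑ π : Equiv.Perm (Fin n),
          ((Equiv.Perm.sign π : ℤ) : ℂ) * (starRingEnd ℂ) (∏ i, mdR A p (π i) i))
            * Matrix.det (mdR A p) := by rw [Finset.sum_mul]
    _ = (starRingEnd ℂ) (Matrix.det (mdR A p)) * Matrix.det (mdR A p) := by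
        congr 1
        rw [Matrix.det_apply', map_sum]
        refine Finset.sum_congr rfl fun π _ => ?_
        rw [_root_.map_mul]
        congr 1
        simp

end aux

/-- The mixed determinant of positive semidefinite Hermitian matrices is
a non-negative real number. -/
theorem stmt6 (n : ℕ) (h : Fin n → Matrix (Fin n) (Fin n) ℂ)
    (hpsd : ∀ i, (h i).PosSemidef) :
    0 ≤ (mixedDet n h).re ∧ (mixedDet n h).im = 0 := by
  classical
  rcases Nat.eq_zero_or_pos n with hn | hn
  · subst hn
    have he : (Finset.univ.powerset.filter Finset.Nonempty : Finset (Finset (Fin 0))) = ∅ := by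
      decide
    simp [mixedDet, he]
  -- choose square roots
  choose A hA using fun i => (show ∃ B : Matrix (Fin n) (Fin n) ℂ, h i = B.conjTranspose * B by
    open scoped MatrixOrder in exact CStarAlgebra.nonneg_iff_eq_star_mul_self.mp (hpsd i).nonneg)
  -- Step 1: include the empty set (its term vanishes since n ≥ 1)
  have step1 : ∑ S ∈ Finset.univ.powerset.filter Finset.Nonempty,
        (-1 : ℂ) ^ (n - S.card) * (∑ i ∈ S, h i).det
      = ∑ S ∈ (Finset.univ : Finset (Fin n)).powerset,
        (-1 : ℂ) ^ (n - S.card) * (∑ i ∈ S, h i).det := by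
    rw [Finset.sum_filter_of_ne]
    intro S _ hS
    by_contra hne
    rw [Finset.not_nonempty_iff_eq_empty] at hne
    subst hne
    simp only [Finset.sum_empty] at hS
    rw [(haveI : Nonempty (Fin n) := ⟨⟨0, hn⟩⟩; Matrix.det_zero), mul_zero] at hS
    exact hS rfl
  set D : (Fin n → Fin n) → ℂ := fun f => Matrix.det (Matrix.of fun i j => h (f i) i j) with hD
  -- Step 2: expand each determinant by multilinearity in the rows
  have step2 : ∀ S : Finset (Fin n), (∑ i ∈ S, h i).det
      = ∑ f ∈ Fintype.piFinset (fun _ : Fin n => S), D f := by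
    intro S
    have := (Matrix.detRowAlternating (n := Fin n) (R := ℂ)).toMultilinearMap.map_sum_finset
      (fun i m => h m i) (fun _ => S)
    convert this using 2
    · change Matrix.detRowAlternating _ = Matrix.detRowAlternating _
      congr 1
      ext i j
      simp [Matrix.sum_apply]
    · rfl
  -- Step 3: alternating sum over supersets
  have step3 : ∀ f : Fin n → Fin n,
      ∑ S ∈ Finset.univ.powerset.filter (fun S => ∀ i, f i ∈ S), (-1:ℂ)^(n - S.card)
        = if Function.Surjective f then 1 else 0 := by
    intro f
    have key : ∑ S ∈ Finset.univ.powerset.filter (fun S => ∀ i, f i ∈ S), (-1:ℂ)^(n - S.card)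
        = ∑ m ∈ (Finset.univ \ Finset.image f Finset.univ).powerset, (-1:ℂ)^ m.card := by
      apply Finset.sum_nbij' (i := fun S => Finset.univ \ S) (j := fun m => Finset.univ \ m)
      · intro S hS
        simp only [Finset.mem_filter, Finset.mem_powerset] at hS
        simp only [Finset.mem_powerset]
        intro x hx
        simp only [Finset.mem_sdiff, Finset.mem_univ, true_and] at hx ⊢
        intro hx2
        obtain ⟨i, -, rfl⟩ := Finset.mem_image.mp hx2
        exact hx (hS.2 i)
      · intro m hm
        simp only [Finset.mem_powerset] at hm
        simp only [Finset.mem_filter, Finset.mem_powerset, Finset.subset_univ, true_and]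
        intro i
        simp only [Finset.mem_sdiff, Finset.mem_univ, true_and]
        intro hi
        have := hm hi
        simp only [Finset.mem_sdiff, Finset.mem_univ, true_and] at this
        exact this (Finset.mem_image_of_mem f (Finset.mem_univ i))
      · intro S hS; simp
      · intro m hm; simp
      · intro S hS
        congr 1
        rw [Finset.card_sdiff_of_subset (Finset.subset_univ S)]
        simp
    rw [key]
    have h2z := Finset.sum_powerset_neg_one_pow_card
      (x := Finset.univ \ Finset.image f Finset.univ)
    have hcast : ∑ m ∈ (Finset.univ \ Finset.image f Finset.univ).powerset, (-1:ℂ)^ m.card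
        = ((∑ m ∈ (Finset.univ \ Finset.image f Finset.univ).powerset, (-1:ℤ)^ m.card : ℤ) : ℂ) := by
      push_cast; rfl
    rw [hcast, h2z]
    have hiff : (Finset.univ \ Finset.image f Finset.univ) = ∅ ↔ Function.Surjective f := by
      rw [Finset.sdiff_eq_empty_iff_subset]
      constructor
      · intro hsub x
        have := hsub (Finset.mem_univ x)
        obtain ⟨i, -, hi⟩ := Finset.mem_image.mp this
        exact ⟨i, hi⟩
      · intro hs x _
        obtain ⟨i, hi⟩ := hs x
        exact Finset.mem_image.mpr ⟨i, Finset.mem_univ i, hi⟩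
    split_ifs with h1 h2' h2' <;> simp_all
  -- Step 4: the inclusion–exclusion sum equals the sum over permutations
  have hpi : ∀ S : Finset (Fin n), Fintype.piFinset (fun _ : Fin n => S)
      = Finset.univ.filter (fun f : Fin n → Fin n => ∀ i, f i ∈ S) := by
    intro S; ext f; simp
  have step4 : ∑ S ∈ (Finset.univ : Finset (Fin n)).powerset,
        (-1 : ℂ) ^ (n - S.card) * (∑ i ∈ S, h i).det
      = ∑ σ : Equiv.Perm (Fin n), D ⇑σ := by
    calc ∑ S ∈ (Finset.univ : Finset (Fin n)).powerset,
          (-1 : ℂ) ^ (n - S.card) * (∑ i ∈ S, h i).det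
        = ∑ S ∈ (Finset.univ : Finset (Fin n)).powerset, ∑ f : Fin n → Fin n,
            if (∀ i, f i ∈ S) then (-1 : ℂ) ^ (n - S.card) * D f else 0 := by
          refine Finset.sum_congr rfl fun S _ => ?_
          rw [step2 S, Finset.mul_sum, hpi S, Finset.sum_filter]
      _ = ∑ f : Fin n → Fin n, ∑ S ∈ (Finset.univ : Finset (Fin n)).powerset,
            if (∀ i, f i ∈ S) then (-1 : ℂ) ^ (n - S.card) * D f else 0 := Finset.sum_comm
      _ = ∑ f : Fin n → Fin n, if Function.Surjective f then D f else 0 := by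
          refine Finset.sum_congr rfl fun f _ => ?_
          rw [← Finset.sum_filter, ← Finset.sum_mul, step3 f, ite_mul, one_mul, zero_mul]
      _ = ∑ σ : Equiv.Perm (Fin n), D ⇑σ := by
          rw [← Finset.sum_filter]
          refine (Finset.sum_nbij (i := fun σ : Equiv.Perm (Fin n) => ⇑σ) ?_ ?_ ?_ ?_).symm
          · intro σ _
            simp [σ.surjective]
          · intro σ _ τ _ hst
            exact Equiv.coe_fn_injective hst
          · intro f hf
            simp only [Finset.coe_filter, Finset.mem_univ, true_and, Set.mem_setOf_eq] at hf
            have hb : Function.Bijective f := Finite.surjective_iff_bijective.mp hf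
            exact ⟨Equiv.ofBijective f hb, by simp, rfl⟩
          · intro σ _
            rfl
  -- Step 5: expand each permutation determinant using the square roots
  have step5 : ∀ σ : Equiv.Perm (Fin n), D ⇑σ
      = ∑ f : Fin n → Fin n,
          (starRingEnd ℂ) (∏ i, mdR A (σ, f) i i) * Matrix.det (mdR A (σ, f)) := by
    intro σ
    have e : (Matrix.of fun i j => h (σ i) i j)
        = (Matrix.of fun i j => ((A (σ i)).conjTranspose * A (σ i)) i j) := by
      ext i j
      simp only [Matrix.of_apply]
      rw [hA (σ i)]
    calc D ⇑σ = Matrix.det (Matrix.of fun i j => h (σ i) i j) := rfl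
      _ = _ := by rw [e, md_det_expand]
  -- the total sum over pairs
  set t : Equiv.Perm (Fin n) × (Fin n → Fin n) → ℂ :=
    fun p => (starRingEnd ℂ) (∏ i, mdR A p i i) * Matrix.det (mdR A p) with ht
  have step6 : ∑ σ : Equiv.Perm (Fin n), D ⇑σ = ∑ p : Equiv.Perm (Fin n) × (Fin n → Fin n), t p := by
    rw [Fintype.sum_prod_type]
    exact Finset.sum_congr rfl fun σ _ => step5 σ
  -- Step 7: averaging over the permutation action
  have step7 : (n.factorial : ℂ) * ∑ p : Equiv.Perm (Fin n) × (Fin n → Fin n), t p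
      = ∑ p : Equiv.Perm (Fin n) × (Fin n → Fin n),
          (starRingEnd ℂ) (Matrix.det (mdR A p)) * Matrix.det (mdR A p) := by
    have hcard : ((Fintype.card (Equiv.Perm (Fin n)) : ℕ) : ℂ) = (n.factorial : ℂ) := by
      rw [Fintype.card_perm, Fintype.card_fin]
    calc (n.factorial : ℂ) * ∑ p, t p
        = ∑ _π : Equiv.Perm (Fin n), ∑ p, t p := by
          rw [Finset.sum_const, Finset.card_univ, nsmul_eq_mul, hcard]
      _ = ∑ π : Equiv.Perm (Fin n), ∑ p : Equiv.Perm (Fin n) × (Fin n → Fin n),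
            t (p.1 * π, p.2 ∘ ⇑π) := by
          refine Finset.sum_congr rfl fun π _ => ?_
          refine Fintype.sum_bijective (fun p : Equiv.Perm (Fin n) × (Fin n → Fin n) =>
            (p.1 * π⁻¹, p.2 ∘ ⇑π⁻¹)) ?_ _ _ (fun p => ?_)
          · refine Function.bijective_iff_has_inverse.mpr
              ⟨fun p => (p.1 * π, p.2 ∘ ⇑π), fun p => ?_, fun p => ?_⟩
            · refine Prod.ext ?_ ?_
              · simp
              · funext x; simp
            · refine Prod.ext ?_ ?_
              · simp
              · funext x; simp
          · congr 1
            refine Prod.ext ?_ ?_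
            · simp
            · funext x; simp
      _ = ∑ p : Equiv.Perm (Fin n) × (Fin n → Fin n), ∑ π : Equiv.Perm (Fin n),
            t (p.1 * π, p.2 ∘ ⇑π) := Finset.sum_comm
      _ = _ := Finset.sum_congr rfl fun p _ => md_orbit A p
  -- put everything together
  have hfac : (n.factorial : ℂ) ≠ 0 := by
    exact_mod_cast Nat.cast_ne_zero.mpr n.factorial_ne_zero
  have key : mixedDet n h = (((n.factorial : ℝ)⁻¹ * ((n.factorial : ℝ)⁻¹ *
      ∑ p : Equiv.Perm (Fin n) × (Fin n → Fin n), Complex.normSq (Matrix.det (mdR A p)))) : ℝ) := by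
    have hsum : ∑ p : Equiv.Perm (Fin n) × (Fin n → Fin n), t p
        = (n.factorial : ℂ)⁻¹ * ∑ p : Equiv.Perm (Fin n) × (Fin n → Fin n),
            (starRingEnd ℂ) (Matrix.det (mdR A p)) * Matrix.det (mdR A p) := by
      rw [← step7, inv_mul_cancel_left₀ hfac]
    rw [mixedDet, step1, step4, step6, hsum]
    push_cast
    congr 2
    refine Finset.sum_congr rfl fun p _ => ?_
    rw [← Complex.normSq_eq_conj_mul_self]
  rw [key]
  constructor
  · rw [Complex.ofReal_re]
    have h1 : (0:ℝ) ≤ (n.factorial : ℝ)⁻¹ := by positivity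
    refine mul_nonneg h1 (mul_nonneg h1 ?_)
    exact Finset.sum_nonneg fun p _ => Complex.normSq_nonneg _
  · rw [Complex.ofReal_im]
end

section
/- The mixed determinant of positive semidefinite Hermitian matrices is monotone: if h₁ ≤ h₁′ (i.e. h₁′ − h₁ is positive semidefinite) and h₂,…,h_n are positive semidefinite, then D(h₁,h₂,…,h_n) ≤ D(h₁′,h₂,…,h_n). -/
open scoped ComplexOrder

open Finset

namespace MixedDetAux

/-- Sum over permutations form of the mixed determinant (times n!). -/
noncomputable def mdAux (n : ℕ) (h : Fin n → Matrix (Fin n) (Fin n) ℂ) : ℂ :=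
  ∑ σ : Equiv.Perm (Fin n), (Matrix.of fun r c => h (σ r) r c).det

lemma sum_pow_neg_one (n : ℕ) (R : Finset (Fin n)) :
    ∑ S ∈ Finset.univ.powerset.filter (fun S => R ⊆ S), (-1 : ℂ) ^ (n - S.card)
      = if R = Finset.univ then 1 else 0 := by
  classical
  have key : (∑ T ∈ Rᶜ.powerset, (-1 : ℂ) ^ T.card)
      = if R = Finset.univ then 1 else 0 := by
    have h1 := Finset.sum_powerset_neg_one_pow_card (x := Rᶜ)
    have h2 : ((∑ T ∈ Rᶜ.powerset, (-1 : ℤ) ^ T.card : ℤ) : ℂ)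
        = ∑ T ∈ Rᶜ.powerset, (-1 : ℂ) ^ T.card := by push_cast; ring_nf
    rw [← h2, h1]
    by_cases hR : R = Finset.univ
    · simp [hR]
    · have : Rᶜ ≠ ∅ := by
        simp only [ne_eq, Finset.compl_eq_empty_iff]
        exact hR
      simp [this, hR]
  rw [← key]
  refine Finset.sum_nbij' (fun S => Sᶜ) (fun T => Tᶜ) ?_ ?_ ?_ ?_ ?_
  · intro S hS
    simp only [Finset.mem_filter, Finset.mem_powerset] at hS
    simpa using Finset.compl_subset_compl.mpr hS.2
  · intro T hT
    simp only [Finset.mem_powerset] at hT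
    simp only [Finset.mem_filter, Finset.mem_powerset]
    exact ⟨Finset.subset_univ _, by simpa using Finset.compl_subset_compl.mpr hT⟩
  · intro S _; simp
  · intro T _; simp
  · intro S hS
    congr 1
    rw [Finset.card_compl, Fintype.card_fin]

lemma polarization (n : ℕ) (hn : n ≠ 0) (h : Fin n → Matrix (Fin n) (Fin n) ℂ) :
    (∑ S ∈ Finset.univ.powerset.filter Finset.Nonempty,
      (-1 : ℂ) ^ (n - S.card) * (∑ i ∈ S, h i).det) = mdAux n h := by
  classical
  have hne : Nonempty (Fin n) := ⟨⟨0, Nat.pos_of_ne_zero hn⟩⟩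
  -- remove the nonempty filter
  have h0 : (∑ S ∈ Finset.univ.powerset.filter Finset.Nonempty,
      (-1 : ℂ) ^ (n - S.card) * (∑ i ∈ S, h i).det)
      = ∑ S ∈ (Finset.univ : Finset (Fin n)).powerset,
        (-1 : ℂ) ^ (n - S.card) * (∑ i ∈ S, h i).det := by
    rw [Finset.sum_filter]
    refine Finset.sum_congr rfl fun S _ => ?_
    by_cases hS : S.Nonempty
    · simp [hS]
    · rw [Finset.not_nonempty_iff_eq_empty.mp hS]
      simp [Matrix.det_zero]
  -- expand each determinant multilinearly
  have hdet : ∀ S : Finset (Fin n), (∑ i ∈ S, h i).det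
      = ∑ f ∈ Fintype.piFinset (fun _ : Fin n => S),
          (Matrix.of fun r c => h (f r) r c).det := by
    intro S
    have hrows : (∑ i ∈ S, h i) = Matrix.of fun r => ∑ i ∈ S, (h i r) := by
      ext r c
      simp [Matrix.sum_apply]
    rw [hrows]
    exact (Matrix.detRowAlternating :
        (Fin n → ℂ) [⋀^Fin n]→ₗ[ℂ] ℂ).toMultilinearMap.map_sum_finset
      (fun r i => h i r) (fun _ => S)
  rw [h0]
  have hpi : ∀ S : Finset (Fin n), Fintype.piFinset (fun _ : Fin n => S)
      = Finset.univ.filter (fun f : Fin n → Fin n => ∀ r, f r ∈ S) := by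
    intro S; ext f; simp [Fintype.mem_piFinset]
  calc
    ∑ S ∈ (Finset.univ : Finset (Fin n)).powerset,
        (-1 : ℂ) ^ (n - S.card) * (∑ i ∈ S, h i).det
      = ∑ S ∈ (Finset.univ : Finset (Fin n)).powerset, ∑ f : Fin n → Fin n,
          (if ∀ r, f r ∈ S then
            (-1 : ℂ) ^ (n - S.card) * (Matrix.of fun r c => h (f r) r c).det else 0) := by
        refine Finset.sum_congr rfl fun S _ => ?_
        rw [hdet S, hpi S, Finset.mul_sum, Finset.sum_filter]
    _ = ∑ f : Fin n → Fin n, ∑ S ∈ (Finset.univ : Finset (Fin n)).powerset,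
          (if ∀ r, f r ∈ S then
            (-1 : ℂ) ^ (n - S.card) * (Matrix.of fun r c => h (f r) r c).det else 0) :=
        Finset.sum_comm
    _ = ∑ f : Fin n → Fin n,
          (if Finset.univ.image f = Finset.univ then
            (Matrix.of fun r c => h (f r) r c).det else 0) := by
        refine Finset.sum_congr rfl fun f _ => ?_
        have hcond : ∀ S : Finset (Fin n), (∀ r, f r ∈ S) ↔ Finset.univ.image f ⊆ S := by
          intro S
          rw [Finset.image_subset_iff]
          simp
        calc
          ∑ S ∈ (Finset.univ : Finset (Fin n)).powerset,
            (if ∀ r, f r ∈ S then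
              (-1 : ℂ) ^ (n - S.card) * (Matrix.of fun r c => h (f r) r c).det else 0)
            = (∑ S ∈ Finset.univ.powerset.filter (fun S => Finset.univ.image f ⊆ S),
                (-1 : ℂ) ^ (n - S.card)) * (Matrix.of fun r c => h (f r) r c).det := by
              rw [Finset.sum_mul, Finset.sum_filter]
              refine Finset.sum_congr rfl fun S _ => ?_
              exact if_congr (hcond S) rfl rfl
          _ = _ := by
              rw [sum_pow_neg_one]
              split <;> simp
    _ = mdAux n h := by
        have hbij : ∀ f : Fin n → Fin n, Finset.univ.image f = Finset.univ →
            Function.Bijective f := by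
          intro f hf
          rw [← Finite.surjective_iff_bijective]
          intro y
          have hy : y ∈ Finset.univ.image f := by rw [hf]; exact Finset.mem_univ y
          rcases Finset.mem_image.mp hy with ⟨x, _, hx⟩
          exact ⟨x, hx⟩
        rw [mdAux, ← Finset.sum_filter]
        refine Finset.sum_bij' (fun f hf => Equiv.ofBijective f
            (hbij f (Finset.mem_filter.mp hf).2))
          (fun σ _ => ⇑σ) (fun f hf => Finset.mem_univ _) ?_ ?_ ?_ ?_
        · intro σ _
          simp only [Finset.mem_filter, Finset.mem_univ, true_and]
          exact Finset.image_univ_of_surjective σ.surjective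
        · intro f hf; rfl
        · intro σ _; ext x; rfl
        · intro f hf; rfl


lemma mdAux_update_add (n : ℕ) (h : Fin n → Matrix (Fin n) (Fin n) ℂ) (i : Fin n)
    (a b : Matrix (Fin n) (Fin n) ℂ) :
    mdAux n (Function.update h i (a + b))
      = mdAux n (Function.update h i a) + mdAux n (Function.update h i b) := by
  classical
  rw [mdAux, mdAux, mdAux, ← Finset.sum_add_distrib]
  refine Finset.sum_congr rfl fun σ _ => ?_
  have key : ∀ x : Matrix (Fin n) (Fin n) ℂ,
      (Matrix.of fun r c => Function.update h i x (σ r) r c)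
        = Matrix.updateRow (Matrix.of fun r c => h (σ r) r c) (σ⁻¹ i) (x (σ⁻¹ i)) := by
    intro x
    ext r c
    by_cases hr : r = σ⁻¹ i
    · subst hr
      have : σ (σ⁻¹ i) = i := Equiv.apply_symm_apply σ i
      simp [Matrix.updateRow_self, Function.update_apply, this]
    · have hne : σ r ≠ i := by
        intro hc
        exact hr (by rw [← hc]; exact (Equiv.symm_apply_apply σ r).symm)
      rw [Matrix.updateRow_ne hr]
      simp [Matrix.updateRow_ne hr, Function.update_apply, hne]
  rw [key, key, key]
  have : (a + b) (σ⁻¹ i) = a (σ⁻¹ i) + b (σ⁻¹ i) := rfl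
  rw [this, Matrix.det_updateRow_add]

open scoped MatrixOrder in
lemma mdAux_nonneg (n : ℕ) (h : Fin n → Matrix (Fin n) (Fin n) ℂ)
    (hpsd : ∀ i, (h i).PosSemidef) : ∃ t : ℝ, 0 ≤ t ∧ mdAux n h = (t : ℂ) := by
  classical
  set v : Fin n → Fin n → Fin n → ℂ := fun i k c => CFC.sqrt (h i) c k with hv
  have hentry : ∀ i a b, h i a b = ∑ k, v i k a * (starRingEnd ℂ) (v i k b) := by
    intro i a b
    have h1 : (CFC.sqrt (h i) * CFC.sqrt (h i)) a b = h i a b := by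
      rw [CFC.sqrt_mul_sqrt_self (h i) (hpsd i).nonneg]
    rw [← h1, Matrix.mul_apply]
    refine Finset.sum_congr rfl fun k _ => ?_
    congr 1
    exact ((Matrix.nonneg_iff_posSemidef.mp (CFC.sqrt_nonneg (h i))).isHermitian.apply k b).symm
  -- expand each determinant over the rank-one pieces
  have expand : ∀ σ : Equiv.Perm (Fin n),
      (Matrix.of fun r c => h (σ r) r c).det
        = ∑ K : Fin n → Fin n, (∏ r, v (σ r) (K r) r) *
            (Matrix.of fun r c => (starRingEnd ℂ) (v (σ r) (K r) c)).det := by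
    intro σ
    have hrow : (Matrix.of fun r c => h (σ r) r c)
        = fun r => ∑ k, v (σ r) k r • fun c => (starRingEnd ℂ) (v (σ r) k c) := by
      ext r c
      simp [hentry, Finset.sum_apply, smul_eq_mul]
    show (Matrix.detRowAlternating : (Fin n → ℂ) [⋀^Fin n]→ₗ[ℂ] ℂ) _ = _
    rw [hrow]
    refine ((Matrix.detRowAlternating :
        (Fin n → ℂ) [⋀^Fin n]→ₗ[ℂ] ℂ).toMultilinearMap.map_sum
      (fun r k => v (σ r) k r • fun c => (starRingEnd ℂ) (v (σ r) k c))).trans ?_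
    refine Finset.sum_congr rfl fun K _ => ?_
    refine ((Matrix.detRowAlternating :
        (Fin n → ℂ) [⋀^Fin n]→ₗ[ℂ] ℂ).toMultilinearMap.map_smul_univ
      (fun r => v (σ r) (K r) r)
      (fun r => fun c => (starRingEnd ℂ) (v (σ r) (K r) c))).trans ?_
    rw [smul_eq_mul]
    rfl
  -- reindex K ↦ κ ∘ σ and compute each κ-sum as |det|²
  have key : mdAux n h
      = ∑ κ : Fin n → Fin n,
          ((Matrix.of fun a b => v a (κ a) b).det *
            (starRingEnd ℂ) ((Matrix.of fun a b => v a (κ a) b).det)) := by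
    rw [mdAux]
    calc
      ∑ σ : Equiv.Perm (Fin n), (Matrix.of fun r c => h (σ r) r c).det
        = ∑ σ : Equiv.Perm (Fin n), ∑ κ : Fin n → Fin n,
            (∏ r, v (σ r) (κ (σ r)) r) *
              (Matrix.of fun r c => (starRingEnd ℂ) (v (σ r) (κ (σ r)) c)).det := by
          refine Finset.sum_congr rfl fun σ _ => ?_
          rw [expand σ]
          refine Fintype.sum_equiv (Equiv.arrowCongr σ (Equiv.refl (Fin n))) _ _ ?_
          intro K
          have hK : ∀ r, (Equiv.arrowCongr σ (Equiv.refl (Fin n))) K (σ r) = K r := by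
            intro r
            simp [Equiv.arrowCongr_apply]
          simp only [hK]
      _ = ∑ κ : Fin n → Fin n, ∑ σ : Equiv.Perm (Fin n),
            (∏ r, v (σ r) (κ (σ r)) r) *
              (Matrix.of fun r c => (starRingEnd ℂ) (v (σ r) (κ (σ r)) c)).det :=
          Finset.sum_comm
      _ = _ := by
          refine Finset.sum_congr rfl fun κ _ => ?_
          have hperm : ∀ σ : Equiv.Perm (Fin n),
              (Matrix.of fun r c => (starRingEnd ℂ) (v (σ r) (κ (σ r)) c)).det
                = (Equiv.Perm.sign σ : ℤ) *
                    (Matrix.of fun a b => (starRingEnd ℂ) (v a (κ a) b)).det := by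
            intro σ
            have := Matrix.det_permute σ (Matrix.of fun a b => (starRingEnd ℂ) (v a (κ a) b))
            simpa [Matrix.submatrix] using this
          calc
            ∑ σ : Equiv.Perm (Fin n),
              (∏ r, v (σ r) (κ (σ r)) r) *
                (Matrix.of fun r c => (starRingEnd ℂ) (v (σ r) (κ (σ r)) c)).det
              = (∑ σ : Equiv.Perm (Fin n), ((Equiv.Perm.sign σ : ℤ) : ℂ) *
                  ∏ r, v (σ r) (κ (σ r)) r) *
                    (Matrix.of fun a b => (starRingEnd ℂ) (v a (κ a) b)).det := by
                rw [Finset.sum_mul]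
                refine Finset.sum_congr rfl fun σ _ => ?_
                rw [hperm σ]
                ring
            _ = (Matrix.of fun a b => v a (κ a) b).det *
                  (starRingEnd ℂ) ((Matrix.of fun a b => v a (κ a) b).det) := by
                congr 1
                · rw [Matrix.det_apply']
                  rfl
                · rw [RingHom.map_det]
                  congr 1
  refine ⟨∑ κ : Fin n → Fin n, Complex.normSq ((Matrix.of fun a b => v a (κ a) b).det), ?_, ?_⟩
  · exact Finset.sum_nonneg fun κ _ => Complex.normSq_nonneg _
  · rw [key]
    push_cast
    refine Finset.sum_congr rfl fun κ _ => ?_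
    rw [Complex.mul_conj]


end MixedDetAux

open MixedDetAux in
/-- The mixed determinant of PSD Hermitian matrices is monotone in each argument. -/
theorem stmt7 (n : ℕ) (h : Fin n → Matrix (Fin n) (Fin n) ℂ)
    (hpsd : ∀ i, (h i).PosSemidef) (i : Fin n)
    (a b : Matrix (Fin n) (Fin n) ℂ) (ha : a.PosSemidef) (hb : b.PosSemidef)
    (hab : (b - a).PosSemidef) :
    (mixedDet n (Function.update h i a)).re ≤
      (mixedDet n (Function.update h i b)).re := by
  classical
  have hn : n ≠ 0 := fun h0 => Fin.elim0 (h0 ▸ i)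
  have hmd : ∀ g : Fin n → Matrix (Fin n) (Fin n) ℂ,
      mixedDet n g = (n.factorial : ℂ)⁻¹ * mdAux n g := fun g => by
    rw [mixedDet, polarization n hn]
  have hsplit : mdAux n (Function.update h i b)
      = mdAux n (Function.update h i a) + mdAux n (Function.update h i (b - a)) := by
    have := mdAux_update_add n h i a (b - a)
    rwa [show a + (b - a) = b from by abel] at this
  have hpsd' : ∀ j, (Function.update h i (b - a) j).PosSemidef := by
    intro j
    rcases eq_or_ne j i with rfl | hj
    · simpa using hab
    · simpa [Function.update_apply, hj] using hpsd j
  obtain ⟨t, ht0, ht⟩ := mdAux_nonneg n _ hpsd'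
  have hkey : mixedDet n (Function.update h i b)
      = mixedDet n (Function.update h i a) + ((((n.factorial : ℝ))⁻¹ * t : ℝ) : ℂ) := by
    rw [hmd, hmd, hsplit, ht, mul_add]
    congr 1
    push_cast
    ring
  rw [hkey, Complex.add_re, Complex.ofReal_re]
  have hnn : 0 ≤ ((n.factorial : ℝ))⁻¹ * t := by positivity
  linarith
end
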